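/- Let F be a food-web on X and L ⊆ X. Let R be the set of vertices r ∈ X such that every directed path in F from a source of F to r contains a vertex of X \ L. Then every viable set S ⊆ L satisfies S ∩ R = ∅. -/

import Mathlib

/-- A set `S` of taxa is viable in the food-web `F` (where `F y x` means that
`y` is a prey of `x`) if every member of `S` is a source of `F` or has at least
one prey in `S`. -/
def Viable {X : Type*} (F : X → X → Prop) (S : Set X) : Prop :=
  ∀ x ∈ S, (∀ y, ¬ F y x) ∨ ∃ y ∈ S, F y x

/-- Let `R` be the set of taxa `r` such that every directed path in `F` from a
source of `F` to `r` contains a vertex outside `L`.  Then every viable set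
`S ⊆ L` satisfies `S ∩ R = ∅`. -/
theorem stmt_10 {X : Type*} [Fintype X] (F : X → X → Prop)
    (hdag : ∀ x : X, ¬ Relation.TransGen F x x) (L : Set X) :
    ∀ S : Set X, S ⊆ L → Viable F S →
      S ∩ {r : X | ∀ l : List X, l.Chain' F →
          (∃ s, l.head? = some s ∧ ∀ y, ¬ F y s) →
          l.getLast? = some r → ∃ v ∈ l, v ∉ L} = ∅ := by
  intro S hSL hS
  have hwf : WellFounded F := by
    have : WellFounded (Relation.TransGen F) := by
      have : IsTrans X (Relation.TransGen F) := ⟨fun _ _ _ => Relation.TransGen.trans⟩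
      have : IsIrrefl X (Relation.TransGen F) := ⟨hdag⟩
      exact Finite.wellFounded_of_trans_of_irrefl _
    exact Subrelation.wf (fun h => Relation.TransGen.single h) this
  have key : ∀ r ∈ S, ∃ l : List X, l.Chain' F ∧
      (∃ s, l.head? = some s ∧ ∀ y, ¬ F y s) ∧ l.getLast? = some r ∧
      ∀ v ∈ l, v ∈ L := by
    intro r hr
    induction r using hwf.induction with
    | _ r ih =>
      rcases hS r hr with hsrc | ⟨y, hyS, hyr⟩
      · exact ⟨[r], List.isChain_singleton r, ⟨r, rfl, hsrc⟩, rfl, by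
          simp; exact hSL hr⟩
      · obtain ⟨l, hchain, ⟨s, hhead, hsrc⟩, hlast, hmem⟩ := ih y hyr hyS
        have hne : l ≠ [] := by rintro rfl; simp at hlast
        refine ⟨l ++ [r], ?_, ⟨s, ?_, hsrc⟩, ?_, ?_⟩
        · rw [show List.Chain' F (l ++ [r]) = List.IsChain F (l ++ [r]) from rfl, List.isChain_append]
          refine ⟨hchain, List.isChain_singleton r, ?_⟩
          intro x hx z hz
          simp at hz; subst hz
          rw [hlast] at hx
          exact Option.some_inj.mp hx ▸ hyr
        · rwa [List.head?_append_of_ne_nil _ hne]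
        · simp
        · intro v hv
          rcases List.mem_append.mp hv with h | h
          · exact hmem v h
          · simp at h; subst h; exact hSL hr
  ext r
  simp only [Set.mem_inter_iff, Set.mem_setOf_eq, Set.mem_empty_iff_false, iff_false]
  rintro ⟨hrS, hR⟩
  obtain ⟨l, hchain, hsrc, hlast, hmem⟩ := key r hrS
  obtain ⟨v, hv, hvL⟩ := hR l hchain hsrc hlast
  exact hvL (hmem v hv)
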